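/- Let (M,≤) be a nonempty quasi-ordered set that is sequentially inductive, and let Φ = (φ_i; i ≥ 0) be a sequence of functions φ_i : M → ℝ ∪ {+∞}, each decreasing and bounded below (inf φ_i(M) > −∞ for each i). Then the set max(M;≤;Φ) of (≤,Φ)-maximal points is ≤-cofinal and ≤-invariant in M. -/

import Mathlib

/-- (BBg-P3): if `(M, le)` is a nonempty sequentially inductive quasi-ordered set and
`Φ = (φ i)` is a sequence of decreasing, bounded below functions with values in
`ℝ ∪ {+∞}`, then the set of `(le, Φ)`-maximal points is `le`-cofinal and `le`-invariant. -/
theorem stmt_12 {M : Type*} [Nonempty M] (le : M → M → Prop)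
    (hrefl : ∀ x, le x x)
    (htrans : ∀ x y z, le x y → le y z → le x z)
    (hind : ∀ x : ℕ → M, (∀ n, le (x n) (x (n + 1))) → ∃ v, ∀ n, le (x n) v)
    (φ : ℕ → M → EReal)
    (hne_bot : ∀ i x, φ i x ≠ ⊥)
    (hdecr : ∀ i, ∀ x y, le x y → φ i y ≤ φ i x)
    (hbdd : ∀ i, ∃ c : ℝ, ∀ x, (c : EReal) ≤ φ i x) :
    (∀ u : M, ∃ v, le u v ∧ ∀ i, ∀ w, le v w → φ i v = φ i w) ∧
    (∀ z, (∀ i, ∀ w, le z w → φ i z = φ i w) →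
      ∀ y, le z y → ∀ i, ∀ w, le y w → φ i y = φ i w) := by
  classical
  constructor
  · -- cofinality
    intro u
    choose c hc using hbdd
    -- truncated real-valued functions indexed by (i, q)
    set f : ℕ × ℚ → M → ℝ := fun p x => (min (φ p.1 x) ((p.2 : ℝ) : EReal)).toReal with hfdef
    set B : ℕ × ℚ → ℝ := fun p => min (c p.1) (p.2 : ℝ) with hBdef
    have hmlb : ∀ p x, ((B p : ℝ) : EReal) ≤ min (φ p.1 x) ((p.2 : ℝ) : EReal) := by
      intro p x
      refine le_min (le_trans ?_ (hc p.1 x)) ?_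
      · exact_mod_cast min_le_left (c p.1) (p.2 : ℝ)
      · exact_mod_cast min_le_right (c p.1) (p.2 : ℝ)
    have hmbot : ∀ (p : ℕ × ℚ) (x : M), min (φ p.1 x) ((p.2 : ℝ) : EReal) ≠ ⊥ := by
      intro p x
      exact ne_of_gt (lt_of_lt_of_le (EReal.bot_lt_coe (B p)) (hmlb p x))
    have hmtop : ∀ (p : ℕ × ℚ) (x : M), min (φ p.1 x) ((p.2 : ℝ) : EReal) ≠ ⊤ := by
      intro p x
      exact ne_of_lt (lt_of_le_of_lt (min_le_right _ _) (EReal.coe_lt_top _))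
    have hfB : ∀ p x, B p ≤ f p x := by
      intro p x
      have h := EReal.toReal_le_toReal (hmlb p x) (EReal.coe_ne_bot _) (hmtop p x)
      simpa using h
    have hfdec : ∀ p x y, le x y → f p y ≤ f p x := by
      intro p x y hxy
      exact EReal.toReal_le_toReal
        (min_le_min (hdecr p.1 x y hxy) le_rfl) (hmbot p y) (hmtop p x)
    -- recovery of φ-equality from f-equality
    have hrec : ∀ i v w, le v w → (∀ q : ℚ, f (i, q) v = f (i, q) w) → φ i v = φ i w := by
      intro i v w hvw hq
      have hle : φ i w ≤ φ i v := hdecr i v w hvw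
      rcases eq_or_lt_of_le hle with h | h
      · exact h.symm
      · obtain ⟨q, hq1, hq2⟩ := EReal.exists_rat_btwn_of_lt h
        have h1 : min (φ i v) ((q : ℝ) : EReal) = ((q : ℝ) : EReal) := min_eq_right hq2.le
        have h2 : min (φ i w) ((q : ℝ) : EReal) = φ i w := min_eq_left hq1.le
        have hqq := hq q
        simp only [hfdef] at hqq
        rw [h1, h2] at hqq
        have hwtop : φ i w ≠ ⊤ := ne_of_lt (lt_of_lt_of_le hq1 le_top)
        have : ((q : ℝ) : EReal) = φ i w := by
          rw [← EReal.coe_toReal hwtop (hne_bot i w), ← hqq]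
          simp
        rw [this] at hq1
        exact absurd hq1 (lt_irrefl _)
    -- summable weights
    set g : ℕ × ℚ → ℝ := fun p => (1 / 2 : ℝ) ^ (Encodable.encode p) with hgdef
    have hgpos : ∀ p, 0 < g p := fun p => pow_pos (by norm_num) _
    have hgsum : Summable g :=
      summable_geometric_two.comp_injective Encodable.encode_injective
    -- normalized functions
    set D : ℕ × ℚ → ℝ := fun p => 1 + f p u - B p with hDdef
    have hD1 : ∀ p, 1 ≤ D p := by
      intro p; have := hfB p u; simp only [hDdef]; linarith
    have hD0 : ∀ p, D p ≠ 0 := fun p => by have := hD1 p; linarith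
    set s : ℕ × ℚ → M → ℝ := fun p x => (min (f p x) (f p u) - B p) / D p with hsdef
    have hs0 : ∀ p x, 0 ≤ s p x := by
      intro p x
      apply div_nonneg _ (by linarith [hD1 p])
      have := hfB p x; have := hfB p u
      have : B p ≤ min (f p x) (f p u) := le_min ‹B p ≤ f p x› ‹B p ≤ f p u›
      linarith
    have hs1 : ∀ p x, s p x ≤ 1 := by
      intro p x
      rw [div_le_one (by linarith [hD1 p])]
      have := min_le_right (f p x) (f p u)
      simp only [hDdef]; linarith
    have hsdec : ∀ p x y, le x y → s p y ≤ s p x := by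
      intro p x y hxy
      have hDpos : (0 : ℝ) < D p := by linarith [hD1 p]
      have hnum : min (f p y) (f p u) - B p ≤ min (f p x) (f p u) - B p := by
        have := min_le_min (hfdec p x y hxy) (le_refl (f p u))
        linarith
      exact (div_le_div_iff_of_pos_right hDpos).mpr hnum
    -- combined functional
    set F : M → ℝ := fun x => ∑' p, g p * s p x with hFdef
    have hFsum : ∀ x, Summable (fun p => g p * s p x) := by
      intro x
      refine Summable.of_nonneg_of_le
        (fun p => mul_nonneg (hgpos p).le (hs0 p x))
        (fun p => mul_le_of_le_one_right (hgpos p).le (hs1 p x)) hgsum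
    have hFdec : ∀ x y, le x y → F y ≤ F x := by
      intro x y h
      exact Summable.tsum_le_tsum
        (fun p => mul_le_mul_of_nonneg_left (hsdec p x y h) (hgpos p).le)
        (hFsum y) (hFsum x)
    have hFnonneg : ∀ x, 0 ≤ F x := by
      intro x
      exact tsum_nonneg (fun p => mul_nonneg (hgpos p).le (hs0 p x))
    have hFeq : ∀ v w, le v w → F v = F w → ∀ p, s p v = s p w := by
      intro v w hvw hFvw p
      have hsum : Summable (fun p => g p * s p v - g p * s p w) := (hFsum v).sub (hFsum w)
      have ht : ∑' p, (g p * s p v - g p * s p w) = 0 := by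
        rw [Summable.tsum_sub (hFsum v) (hFsum w)]
        simpa [hFdef] using sub_eq_zero.mpr hFvw
      have hnn : ∀ p, 0 ≤ g p * s p v - g p * s p w := fun p =>
        sub_nonneg.mpr (mul_le_mul_of_nonneg_left (hsdec p v w hvw) (hgpos p).le)
      have hle0 : g p * s p v - g p * s p w ≤ 0 := by
        have := Summable.le_tsum hsum p (fun j _ => hnn j)
        rw [ht] at this
        exact this
      have heq0 : g p * s p v = g p * s p w := by linarith [hnn p]
      exact mul_left_cancel₀ (hgpos p).ne' heq0
    have hsf : ∀ p v w, le u v → le u w → s p v = s p w → f p v = f p w := by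
      intro p v w huv huw h
      have h1 : min (f p v) (f p u) = f p v := min_eq_left (hfdec p u v huv)
      have h2 : min (f p w) (f p u) = f p w := min_eq_left (hfdec p u w huw)
      simp only [hsdef, h1, h2] at h
      have := (div_left_inj' (hD0 p)).mp h
      linarith
    -- the key recursive step
    have key : ∀ (n : ℕ) (a : M), ∃ b, le a b ∧ ∀ w, le a w → F b < F w + (1 / 2) ^ n := by
      intro n a
      set S : Set ℝ := F '' {w | le a w} with hSdef
      have hSne : S.Nonempty := ⟨F a, a, hrefl a, rfl⟩
      have hSbdd : BddBelow S := ⟨0, by rintro y ⟨w, _, rfl⟩; exact hFnonneg w⟩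
      obtain ⟨y, ⟨b, hb, rfl⟩, hy⟩ := Real.lt_sInf_add_pos hSne
        (pow_pos (by norm_num : (0:ℝ) < 1/2) n)
      exact ⟨b, hb, fun w hw =>
        lt_of_lt_of_le hy (add_le_add_left (csInf_le hSbdd ⟨w, hw, rfl⟩) _)⟩
    -- constructing the ascending sequence
    let x : ℕ → M := fun n => Nat.rec u (fun n a => (key n a).choose) n
    have hxs : ∀ n, x (n + 1) = (key n (x n)).choose := fun n => rfl
    have hasc : ∀ n, le (x n) (x (n + 1)) := fun n => (key n (x n)).choose_spec.1
    obtain ⟨v, hv⟩ := hind x hasc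
    have huv : le u v := hv 0
    refine ⟨v, huv, ?_⟩
    have hFmax : ∀ w, le v w → F v = F w := by
      intro w hw
      have h1 : F w ≤ F v := hFdec v w hw
      have h2 : F v ≤ F w := by
        refine le_of_forall_pos_le_add ?_
        intro ε hε
        obtain ⟨n, hn⟩ := exists_pow_lt_of_lt_one hε (by norm_num : (1/2 : ℝ) < 1)
        have hvx : F v ≤ F (x (n + 1)) := hFdec _ _ (hv (n + 1))
        have hkey := (key n (x n)).choose_spec.2 w (htrans _ _ _ (hv n) hw)
        rw [← hxs n] at hkey
        linarith
      linarith
    intro i w hw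
    apply hrec i v w hw
    intro q
    exact hsf (i, q) v w huv (htrans _ _ _ huv hw) (hFeq v w hw (hFmax w hw) (i, q))
  · -- invariance
    intro z hz y hzy i w hyw
    have h1 := hz i y hzy
    have h2 := hz i w (htrans z y w hzy hyw)
    rw [← h1, ← h2]
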